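/- Let E be a closed aggregate atom of the form α{t₁ : L₁ ; … ; tₙ : Lₙ} = s, where s is an interval-free term. Let E_≤ be the aggregate atom α{t₁ : L₁ ; … ; tₙ : Lₙ} ≤ s and E_≥ be the aggregate atom α{t₁ : L₁ ; … ; tₙ : Lₙ} ≥ s. Then the infinitary propositional formula τE is strongly equivalent to τE_≤ ∧ τE_≥. -/

import Mathlib

namespace AG

/-! Infinitary propositional formulas (Truszczyński), satisfaction, reducts,
stable models, and strong equivalence. Conjunctions and disjunctions over
arbitrary sets of formulas are represented by (Type-valued) indexed families. -/

inductive Formula (σ : Type) : Type 1 where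
  | atom : σ → Formula σ
  | conj : (ι : Type) → (ι → Formula σ) → Formula σ
  | disj : (ι : Type) → (ι → Formula σ) → Formula σ
  | impl : Formula σ → Formula σ → Formula σ

namespace Formula

def bot {σ : Type} : Formula σ := disj Empty (fun e => e.elim)

def top {σ : Type} : Formula σ := conj Empty (fun e => e.elim)

def neg {σ : Type} (F : Formula σ) : Formula σ := impl F bot

def and {σ : Type} (F G : Formula σ) : Formula σ :=
  conj Bool (fun b => if b then F else G)

def or {σ : Type} (F G : Formula σ) : Formula σ :=
  disj Bool (fun b => if b then F else G)

end Formula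

/-- Satisfaction of an infinitary formula by an interpretation `I ⊆ σ`. -/
def Sat {σ : Type} (I : Set σ) : Formula σ → Prop
  | .atom p => p ∈ I
  | .conj _ f => ∀ i, Sat I (f i)
  | .disj _ f => ∃ i, Sat I (f i)
  | .impl F G => Sat I F → Sat I G

open Classical in
/-- The reduct `F^I` of a formula `F` with respect to an interpretation `I`. -/
noncomputable def reduct {σ : Type} (I : Set σ) : Formula σ → Formula σ
  | .atom p => if p ∈ I then .atom p else .bot
  | .conj ι f => .conj ι (fun i => reduct I (f i))
  | .disj ι f => .disj ι (fun i => reduct I (f i))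
  | .impl F G => if Sat I (.impl F G) then .impl (reduct I F) (reduct I G) else .bot

/-- `I` is a stable model of a set `H` of infinitary formulas: `I` is minimal with
respect to set inclusion among the interpretations satisfying the reducts (w.r.t. `I`)
of all formulas in `H`. -/
def IsStableModel {σ : Type} (H : Set (Formula σ)) (I : Set σ) : Prop :=
  (∀ F ∈ H, Sat I (reduct I F)) ∧
  ∀ J : Set σ, J ⊆ I → (∀ F ∈ H, Sat J (reduct I F)) → J = I

/-- Strong equivalence of infinitary formulas: `H ∪ {F}` and `H ∪ {G}` have the same
stable models for every set `H` of formulas. -/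
def StronglyEquivalent {σ : Type} (F G : Formula σ) : Prop :=
  ∀ (H : Set (Formula σ)) (I : Set σ),
    IsStableModel (insert F H) I ↔ IsStableModel (insert G H) I

/-! Terms of Abstract Gringo: numerals, the symbols `inf`/`sup`, symbolic
constants, variables, function terms, arithmetic/interval terms, and tuples. -/

inductive AGOp : Type where
  | add | sub | mul | div | interval

inductive AGTerm : Type where
  | num : ℤ → AGTerm
  | inf : AGTerm
  | sup : AGTerm
  | sym : ℕ → AGTerm
  | var : ℕ → AGTerm
  | fn : ℕ → List AGTerm → AGTerm
  | bin : AGOp → AGTerm → AGTerm → AGTerm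
  | tuple : List AGTerm → AGTerm

mutual

/-- `tval t` is the set `[t]` of values of a ground term `t`. -/
def tval : AGTerm → Set AGTerm
  | AGTerm.num n => {u | u = AGTerm.num n}
  | AGTerm.inf => {u | u = AGTerm.inf}
  | AGTerm.sup => {u | u = AGTerm.sup}
  | AGTerm.sym c => {u | u = AGTerm.sym c}
  | AGTerm.var _ => ∅
  | AGTerm.fn f ts => {u | ∃ rs ∈ tvalList ts, u = AGTerm.fn f rs}
  | AGTerm.bin AGOp.add t₁ t₂ =>
      {u | ∃ n₁ n₂ : ℤ, AGTerm.num n₁ ∈ tval t₁ ∧ AGTerm.num n₂ ∈ tval t₂ ∧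
        u = AGTerm.num (n₁ + n₂)}
  | AGTerm.bin AGOp.sub t₁ t₂ =>
      {u | ∃ n₁ n₂ : ℤ, AGTerm.num n₁ ∈ tval t₁ ∧ AGTerm.num n₂ ∈ tval t₂ ∧
        u = AGTerm.num (n₁ - n₂)}
  | AGTerm.bin AGOp.mul t₁ t₂ =>
      {u | ∃ n₁ n₂ : ℤ, AGTerm.num n₁ ∈ tval t₁ ∧ AGTerm.num n₂ ∈ tval t₂ ∧
        u = AGTerm.num (n₁ * n₂)}
  | AGTerm.bin AGOp.div t₁ t₂ =>
      {u | ∃ n₁ n₂ : ℤ, AGTerm.num n₁ ∈ tval t₁ ∧ AGTerm.num n₂ ∈ tval t₂ ∧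
        n₂ ≠ 0 ∧ u = AGTerm.num (Int.fdiv n₁ n₂)}
  | AGTerm.bin AGOp.interval t₁ t₂ =>
      {u | ∃ m n₁ n₂ : ℤ, AGTerm.num n₁ ∈ tval t₁ ∧ AGTerm.num n₂ ∈ tval t₂ ∧
        n₁ ≤ m ∧ m ≤ n₂ ∧ u = AGTerm.num m}
  | AGTerm.tuple ts => {u | ∃ rs ∈ tvalList ts, u = AGTerm.tuple rs}

/-- `tvalList ts` is the set `[t]` of values of a tuple `t` of ground terms
(componentwise evaluation). -/
def tvalList : List AGTerm → Set (List AGTerm)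
  | [] => {l | l = []}
  | t :: ts => {l | ∃ r ∈ tval t, ∃ rs ∈ tvalList ts, l = r :: rs}

end

/-- A term is ground if it contains no variables. -/
inductive Ground : AGTerm → Prop where
  | num (n : ℤ) : Ground (AGTerm.num n)
  | inf : Ground AGTerm.inf
  | sup : Ground AGTerm.sup
  | sym (c : ℕ) : Ground (AGTerm.sym c)
  | fn (f : ℕ) (ts : List AGTerm) : (∀ t ∈ ts, Ground t) → Ground (AGTerm.fn f ts)
  | bin (o : AGOp) (t₁ t₂ : AGTerm) :
      Ground t₁ → Ground t₂ → Ground (AGTerm.bin o t₁ t₂)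
  | tuple (ts : List AGTerm) : (∀ t ∈ ts, Ground t) → Ground (AGTerm.tuple ts)

/-- A term is precomputed if it contains neither variables nor the symbols
`+ - × / ..`. -/
inductive Precomputed : AGTerm → Prop where
  | num (n : ℤ) : Precomputed (AGTerm.num n)
  | inf : Precomputed AGTerm.inf
  | sup : Precomputed AGTerm.sup
  | sym (c : ℕ) : Precomputed (AGTerm.sym c)
  | fn (f : ℕ) (ts : List AGTerm) :
      (∀ t ∈ ts, Precomputed t) → Precomputed (AGTerm.fn f ts)
  | tuple (ts : List AGTerm) :
      (∀ t ∈ ts, Precomputed t) → Precomputed (AGTerm.tuple ts)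

/-- A term is interval-free if it does not contain the symbol `..`. -/
inductive IntervalFree : AGTerm → Prop where
  | num (n : ℤ) : IntervalFree (AGTerm.num n)
  | inf : IntervalFree AGTerm.inf
  | sup : IntervalFree AGTerm.sup
  | sym (c : ℕ) : IntervalFree (AGTerm.sym c)
  | var (v : ℕ) : IntervalFree (AGTerm.var v)
  | fn (f : ℕ) (ts : List AGTerm) :
      (∀ t ∈ ts, IntervalFree t) → IntervalFree (AGTerm.fn f ts)
  | bin (o : AGOp) (t₁ t₂ : AGTerm) : o ≠ AGOp.interval →
      IntervalFree t₁ → IntervalFree t₂ → IntervalFree (AGTerm.bin o t₁ t₂)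
  | tuple (ts : List AGTerm) :
      (∀ t ∈ ts, IntervalFree t) → IntervalFree (AGTerm.tuple ts)

/-- The variable `v` occurs in the term. -/
inductive VarOccurs (v : ℕ) : AGTerm → Prop where
  | var : VarOccurs v (AGTerm.var v)
  | fn {f : ℕ} {ts : List AGTerm} {t : AGTerm} :
      t ∈ ts → VarOccurs v t → VarOccurs v (AGTerm.fn f ts)
  | binLeft {o : AGOp} {t₁ t₂ : AGTerm} :
      VarOccurs v t₁ → VarOccurs v (AGTerm.bin o t₁ t₂)
  | binRight {o : AGOp} {t₁ t₂ : AGTerm} :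
      VarOccurs v t₂ → VarOccurs v (AGTerm.bin o t₁ t₂)
  | tuple {ts : List AGTerm} {t : AGTerm} :
      t ∈ ts → VarOccurs v t → VarOccurs v (AGTerm.tuple ts)

/-- The substitution mapping the variables in the list `xs` to the corresponding
members of the list `rs` (and every other variable to itself). -/
def assign (xs : List ℕ) (rs : List AGTerm) (v : ℕ) : AGTerm :=
  ((xs.zip rs).lookup v).getD (AGTerm.var v)

/-- Applying a substitution to a term. -/
def subst (ρ : ℕ → AGTerm) : AGTerm → AGTerm
  | AGTerm.num n => AGTerm.num n
  | AGTerm.inf => AGTerm.inf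
  | AGTerm.sup => AGTerm.sup
  | AGTerm.sym c => AGTerm.sym c
  | AGTerm.var v => ρ v
  | AGTerm.fn f ts => AGTerm.fn f (ts.attach.map (fun x => subst ρ x.1))
  | AGTerm.bin o t₁ t₂ => AGTerm.bin o (subst ρ t₁) (subst ρ t₂)
  | AGTerm.tuple ts => AGTerm.tuple (ts.attach.map (fun x => subst ρ x.1))
termination_by t => sizeOf t
decreasing_by
  all_goals simp_wf
  all_goals try (cases x; simp_all)
  all_goals first
    | (rename_i hmem; have := List.sizeOf_lt_of_mem hmem; omega)
    | omega

/-- The assumed total order on precomputed terms: `inf` is its least element,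
`sup` is its greatest element, and numerals are ordered according to their
integers. -/
structure AGOrder : Type where
  le : AGTerm → AGTerm → Prop
  refl : ∀ t : AGTerm, Precomputed t → le t t
  trans : ∀ a b c : AGTerm, Precomputed a → Precomputed b → Precomputed c →
    le a b → le b c → le a c
  antisymm : ∀ a b : AGTerm, Precomputed a → Precomputed b →
    le a b → le b a → a = b
  total : ∀ a b : AGTerm, Precomputed a → Precomputed b → le a b ∨ le b a
  inf_le : ∀ t : AGTerm, Precomputed t → le AGTerm.inf t
  le_sup : ∀ t : AGTerm, Precomputed t → le t AGTerm.sup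
  num_le_num : ∀ m n : ℤ, le (AGTerm.num m) (AGTerm.num n) ↔ m ≤ n

/-- The strict order associated with the total order on precomputed terms. -/
def AGOrder.lt (o : AGOrder) (a b : AGTerm) : Prop := o.le a b ∧ a ≠ b

/-- Tuples of precomputed terms of length `k`. -/
def PTuple (k : ℕ) : Type :=
  {r : List AGTerm // r.length = k ∧ ∀ u ∈ r, Precomputed u}

/-- The data of the aggregate elements `t₁ : L₁ ; … ; tₙ : Lₙ` of an aggregate
atom: for each `i`, the list `xᵢ` of variables of `tᵢ : Lᵢ`, the tuple `tᵢ` of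
terms, and the function sending a tuple `r` of precomputed terms (to be
substituted for `xᵢ`) to the infinitary formula `τ∨((Lᵢ)ʳ_{xᵢ})`. -/
structure AggAtom (σ : Type) where
  n : ℕ
  x : Fin n → List ℕ
  t : Fin n → List AGTerm
  L : (i : Fin n) → List AGTerm → Formula σ

/-- The index set `A = {(i, r) : 1 ≤ i ≤ n, r ∈ Aᵢ}`, where `Aᵢ` is the set of
tuples of precomputed terms of the same length as `xᵢ`. -/
def Idx {σ : Type} (E : AggAtom σ) : Type :=
  Σ i : Fin E.n, PTuple (E.x i).length

/-- `[(tᵢ)ʳ_{xᵢ}]` for `a = (i, r) ∈ A`. -/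
def elemVal {σ : Type} (E : AggAtom σ) (a : Idx E) : Set (List AGTerm) :=
  tvalList ((E.t a.1).map (subst (assign (E.x a.1) a.2.1)))

/-- `[Δ]`: the union of the sets `[(tᵢ)ʳ_{xᵢ}]` over `(i, r) ∈ Δ`. -/
def deltaVal {σ : Type} (E : AggAtom σ) (Δ : Set (Idx E)) : Set (List AGTerm) :=
  ⋃ a ∈ Δ, elemVal E a

/-- `τ∨((Lᵢ)ʳ_{xᵢ})` for `a = (i, r) ∈ A`. -/
def fml {σ : Type} (E : AggAtom σ) (a : Idx E) : Formula σ :=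
  E.L a.1 a.2.1

/-- `Δ` justifies the aggregate atom `α{t₁ : L₁ ; … ; tₙ : Lₙ} ≺ s`: the
relation `cmp` (the one denoted by `≺`) holds between `α̂[Δ]` and at least one
precomputed term `u ∈ [s]`. -/
def Justifies {σ : Type} (E : AggAtom σ) (alphaHat : Set (List AGTerm) → AGTerm)
    (cmp : AGTerm → AGTerm → Prop) (s : AGTerm) (Δ : Set (Idx E)) : Prop :=
  ∃ u ∈ tval s, cmp (alphaHat (deltaVal E Δ)) u

/-- `τE`: the conjunction, over all `Δ ⊆ A` that do not justify `E`, of the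
implications `⋀_{(i,r)∈Δ} τ∨((Lᵢ)ʳ_{xᵢ}) → ⋁_{(i,r)∈A∖Δ} τ∨((Lᵢ)ʳ_{xᵢ})`. -/
def tauAgg {σ : Type} (E : AggAtom σ) (justifies : Set (Idx E) → Prop) :
    Formula σ :=
  Formula.conj {Δ : Set (Idx E) // ¬ justifies Δ} (fun Δ =>
    Formula.impl
      (Formula.conj {a : Idx E // a ∈ Δ.1} (fun a => fml E a.1))
      (Formula.disj {a : Idx E // a ∉ Δ.1} (fun a => fml E a.1)))

/-! Auxiliary lemmas. -/

mutual

theorem tval_pre : ∀ t : AGTerm, ∀ u ∈ tval t, Precomputed u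
  | AGTerm.num n, u, hu => by
      simp only [tval, Set.mem_setOf_eq] at hu; subst hu; exact .num n
  | AGTerm.inf, u, hu => by
      simp only [tval, Set.mem_setOf_eq] at hu; subst hu; exact .inf
  | AGTerm.sup, u, hu => by
      simp only [tval, Set.mem_setOf_eq] at hu; subst hu; exact .sup
  | AGTerm.sym c, u, hu => by
      simp only [tval, Set.mem_setOf_eq] at hu; subst hu; exact .sym c
  | AGTerm.var v, u, hu => by
      simp only [tval] at hu; exact absurd hu (Set.notMem_empty u)
  | AGTerm.fn f ts, u, hu => by
      simp only [tval, Set.mem_setOf_eq] at hu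
      obtain ⟨rs, hrs, rfl⟩ := hu
      exact .fn f rs (fun r hr => tvalList_pre ts rs hrs r hr)
  | AGTerm.bin o t₁ t₂, u, hu => by
      cases o <;> simp only [tval, Set.mem_setOf_eq] at hu
      · obtain ⟨n₁, n₂, _, _, rfl⟩ := hu; exact .num _
      · obtain ⟨n₁, n₂, _, _, rfl⟩ := hu; exact .num _
      · obtain ⟨n₁, n₂, _, _, rfl⟩ := hu; exact .num _
      · obtain ⟨n₁, n₂, _, _, _, rfl⟩ := hu; exact .num _
      · obtain ⟨m, n₁, n₂, _, _, _, _, rfl⟩ := hu; exact .num _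
  | AGTerm.tuple ts, u, hu => by
      simp only [tval, Set.mem_setOf_eq] at hu
      obtain ⟨rs, hrs, rfl⟩ := hu
      exact .tuple rs (fun r hr => tvalList_pre ts rs hrs r hr)

theorem tvalList_pre :
    ∀ ts : List AGTerm, ∀ l ∈ tvalList ts, ∀ u ∈ l, Precomputed u
  | [], l, hl => by
      simp only [tvalList, Set.mem_setOf_eq] at hl; subst hl; simp
  | t :: ts, l, hl => by
      simp only [tvalList, Set.mem_setOf_eq] at hl
      obtain ⟨r, hr, rs, hrs, rfl⟩ := hl
      intro u hu
      rcases List.mem_cons.mp hu with rfl | hu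
      · exact tval_pre t u hr
      · exact tvalList_pre ts rs hrs u hu

end

mutual

theorem tval_sub : ∀ t : AGTerm, IntervalFree t →
    ∀ u ∈ tval t, ∀ v ∈ tval t, u = v
  | AGTerm.num n, _, u, hu, v, hv => by
      simp only [tval, Set.mem_setOf_eq] at hu hv; rw [hu, hv]
  | AGTerm.inf, _, u, hu, v, hv => by
      simp only [tval, Set.mem_setOf_eq] at hu hv; rw [hu, hv]
  | AGTerm.sup, _, u, hu, v, hv => by
      simp only [tval, Set.mem_setOf_eq] at hu hv; rw [hu, hv]
  | AGTerm.sym c, _, u, hu, v, hv => by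
      simp only [tval, Set.mem_setOf_eq] at hu hv; rw [hu, hv]
  | AGTerm.var w, _, u, hu, v, hv => by
      simp only [tval] at hu; exact absurd hu (Set.notMem_empty u)
  | AGTerm.fn f ts, h, u, hu, v, hv => by
      simp only [tval, Set.mem_setOf_eq] at hu hv
      obtain ⟨rs, hrs, rfl⟩ := hu
      obtain ⟨rs', hrs', rfl⟩ := hv
      have hts : ∀ t ∈ ts, IntervalFree t := by
        cases h with | fn _ _ h' => exact h'
      rw [tvalList_sub ts hts rs hrs rs' hrs']
  | AGTerm.bin o t₁ t₂, h, u, hu, v, hv => by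
      have h₁ : IntervalFree t₁ := by cases h; assumption
      have h₂ : IntervalFree t₂ := by cases h; assumption
      have hne : o ≠ AGOp.interval := by cases h; assumption
      cases o <;> simp only [tval, Set.mem_setOf_eq] at hu hv
      · obtain ⟨n₁, n₂, ha, hb, rfl⟩ := hu
        obtain ⟨m₁, m₂, ha', hb', rfl⟩ := hv
        have e1 := tval_sub t₁ h₁ _ ha _ ha'
        have e2 := tval_sub t₂ h₂ _ hb _ hb'
        injection e1 with e1; injection e2 with e2; rw [e1, e2]
      · obtain ⟨n₁, n₂, ha, hb, rfl⟩ := hu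
        obtain ⟨m₁, m₂, ha', hb', rfl⟩ := hv
        have e1 := tval_sub t₁ h₁ _ ha _ ha'
        have e2 := tval_sub t₂ h₂ _ hb _ hb'
        injection e1 with e1; injection e2 with e2; rw [e1, e2]
      · obtain ⟨n₁, n₂, ha, hb, rfl⟩ := hu
        obtain ⟨m₁, m₂, ha', hb', rfl⟩ := hv
        have e1 := tval_sub t₁ h₁ _ ha _ ha'
        have e2 := tval_sub t₂ h₂ _ hb _ hb'
        injection e1 with e1; injection e2 with e2; rw [e1, e2]
      · obtain ⟨n₁, n₂, ha, hb, _, rfl⟩ := hu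
        obtain ⟨m₁, m₂, ha', hb', _, rfl⟩ := hv
        have e1 := tval_sub t₁ h₁ _ ha _ ha'
        have e2 := tval_sub t₂ h₂ _ hb _ hb'
        injection e1 with e1; injection e2 with e2; rw [e1, e2]
      · exact absurd rfl hne
  | AGTerm.tuple ts, h, u, hu, v, hv => by
      simp only [tval, Set.mem_setOf_eq] at hu hv
      obtain ⟨rs, hrs, rfl⟩ := hu
      obtain ⟨rs', hrs', rfl⟩ := hv
      have hts : ∀ t ∈ ts, IntervalFree t := by
        cases h with | tuple _ h' => exact h'
      rw [tvalList_sub ts hts rs hrs rs' hrs']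

theorem tvalList_sub : ∀ ts : List AGTerm, (∀ t ∈ ts, IntervalFree t) →
    ∀ l ∈ tvalList ts, ∀ l' ∈ tvalList ts, l = l'
  | [], _, l, hl, l', hl' => by
      simp only [tvalList, Set.mem_setOf_eq] at hl hl'; rw [hl, hl']
  | t :: ts, h, l, hl, l', hl' => by
      simp only [tvalList, Set.mem_setOf_eq] at hl hl'
      obtain ⟨r, hr, rs, hrs, rfl⟩ := hl
      obtain ⟨r', hr', rs', hrs', rfl⟩ := hl'
      have ht : IntervalFree t := h t List.mem_cons_self
      have hts : ∀ u ∈ ts, IntervalFree u := fun u hu => h u (List.mem_cons_of_mem t hu)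
      rw [tval_sub t ht r hr r' hr', tvalList_sub ts hts rs hrs rs' hrs']

end

theorem justifies_eq_iff {σ : Type} (ord : AGOrder) (E : AggAtom σ)
    (alphaHat : Set (List AGTerm) → AGTerm)
    (halpha : ∀ T : Set (List AGTerm), Precomputed (alphaHat T))
    (s : AGTerm) (hif : IntervalFree s) (Δ : Set (Idx E)) :
    Justifies E alphaHat (fun a b => a = b) s Δ ↔
      Justifies E alphaHat ord.le s Δ ∧
      Justifies E alphaHat (fun a b => ord.le b a) s Δ := by
  constructor
  · rintro ⟨u, hu, heq⟩
    have hp : Precomputed u := tval_pre s u hu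
    have hr : ord.le u u := ord.refl u hp
    exact ⟨⟨u, hu, heq ▸ hr⟩, ⟨u, hu, heq ▸ hr⟩⟩
  · rintro ⟨⟨u₁, hu₁, hle⟩, ⟨u₂, hu₂, hge⟩⟩
    have huu : u₁ = u₂ := tval_sub s hif u₁ hu₁ u₂ hu₂
    subst huu
    exact ⟨u₁, hu₁, ord.antisymm _ _ (halpha _) (tval_pre s u₁ hu₁) hle hge⟩

theorem sat_reduct_tauAgg {σ : Type} (E : AggAtom σ)
    (just : Set (Idx E) → Prop) (I J : Set σ) :
    Sat J (reduct I (tauAgg E just)) ↔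
      ∀ Δ : Set (Idx E), ¬ just Δ →
        Sat J (reduct I (Formula.impl
          (Formula.conj {a : Idx E // a ∈ Δ} (fun a => fml E a.1))
          (Formula.disj {a : Idx E // a ∉ Δ} (fun a => fml E a.1)))) := by
  simp only [tauAgg, reduct, Sat, Subtype.forall]

theorem strongEquiv_of_reduct {σ : Type} {F G : Formula σ}
    (h : ∀ I J : Set σ, Sat J (reduct I F) ↔ Sat J (reduct I G)) :
    StronglyEquivalent F G := by
  intro H I
  constructor <;> rintro ⟨h1, h2⟩ <;> refine ⟨?_, ?_⟩
  · intro F' hF'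
    rcases hF' with rfl | hF'
    · exact (h I I).mp (h1 _ (Set.mem_insert _ _))
    · exact h1 _ (Set.mem_insert_of_mem _ hF')
  · intro J hJ hsat
    refine h2 J hJ (fun F' hF' => ?_)
    rcases hF' with rfl | hF'
    · exact (h I J).mpr (hsat _ (Set.mem_insert _ _))
    · exact hsat _ (Set.mem_insert_of_mem _ hF')
  · intro F' hF'
    rcases hF' with rfl | hF'
    · exact (h I I).mpr (h1 _ (Set.mem_insert _ _))
    · exact h1 _ (Set.mem_insert_of_mem _ hF')
  · intro J hJ hsat
    refine h2 J hJ (fun F' hF' => ?_)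
    rcases hF' with rfl | hF'
    · exact (h I J).mp (hsat _ (Set.mem_insert _ _))
    · exact hsat _ (Set.mem_insert_of_mem _ hF')

/-- **Theorem 1 (eliminating equality from aggregate atoms).**
Let `E` be a closed aggregate atom of the form `α{t₁ : L₁ ; … ; tₙ : Lₙ} = s`,
where `s` is an interval-free (ground) term.  If `E_≤` and `E_≥` are obtained
from `E` by replacing `=` with `≤` and `≥` respectively, then `τE` is strongly
equivalent to `τE_≤ ∧ τE_≥`. -/
theorem equality_elimination {σ : Type} (ord : AGOrder) (E : AggAtom σ)
    (hclosed : ∀ i : Fin E.n, ∀ u ∈ E.t i, ∀ v : ℕ, VarOccurs v u → v ∈ E.x i)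
    (alphaHat : Set (List AGTerm) → AGTerm)
    (halpha : ∀ T : Set (List AGTerm), Precomputed (alphaHat T))
    (s : AGTerm) (hground : Ground s) (hif : IntervalFree s) :
    StronglyEquivalent
      (tauAgg E (Justifies E alphaHat (fun a b => a = b) s))
      (Formula.and
        (tauAgg E (Justifies E alphaHat ord.le s))
        (tauAgg E (Justifies E alphaHat (fun a b => ord.le b a) s))) := by
  apply strongEquiv_of_reduct
  intro I J
  have hand : Sat J (reduct I (Formula.and
      (tauAgg E (Justifies E alphaHat ord.le s))
      (tauAgg E (Justifies E alphaHat (fun a b => ord.le b a) s)))) ↔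
      Sat J (reduct I (tauAgg E (Justifies E alphaHat ord.le s))) ∧
      Sat J (reduct I (tauAgg E (Justifies E alphaHat (fun a b => ord.le b a) s))) := by
    constructor
    · intro h
      exact ⟨by simpa using h true, by simpa using h false⟩
    · rintro ⟨h1, h2⟩ b
      cases b <;> simpa
  rw [hand, sat_reduct_tauAgg, sat_reduct_tauAgg, sat_reduct_tauAgg]
  constructor
  · intro h
    constructor <;> intro Δ hΔ <;> apply h Δ <;>
      rw [justifies_eq_iff ord E alphaHat halpha s hif] <;> tauto
  · rintro ⟨h1, h2⟩ Δ hΔ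
    rw [justifies_eq_iff ord E alphaHat halpha s hif] at hΔ
    rcases not_and_or.mp hΔ with h | h
    · exact h1 Δ h
    · exact h2 Δ h

end AG
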